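/- Let θ ∈ [0,1], let u, w be orthonormal vectors in ℝ^K, A : ℝ^K → ℝ^K linear with b₁ = ⟨u, A u⟩, b₂ = ⟨w, A w⟩, ⟨u,(A+A^⊤)w⟩ = 0, and b₂ ≤ a ≤ b₁. Then for Θ = √(a − b₂)/(√(a − b₂) + √(b₁ − a)) (taking Θ ∈ [0,1]), the unit vector x = (Θu + (1−Θ)w)/√(Θ² + (1−Θ)²) satisfies ⟨x, A x⟩ = a, and the unit vector v = ((1−Θ)u − Θw)/√(Θ² + (1−Θ)²) is orthogonal to x and satisfies ⟨v, A v⟩ = b₁ + b₂ − a. -/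

import Mathlib

open Matrix

/-- The two-vector rotation step of the algorithmic Schur–Horn construction. -/
theorem stmt18 (K : ℕ) (A : Matrix (Fin K) (Fin K) ℝ)
    (u w : Fin K → ℝ) (hu : u ⬝ᵥ u = 1) (hw : w ⬝ᵥ w = 1) (huw : u ⬝ᵥ w = 0)
    (b₁ b₂ a : ℝ)
    (hb₁ : b₁ = u ⬝ᵥ A.mulVec u) (hb₂ : b₂ = w ⬝ᵥ A.mulVec w)
    (hcross : u ⬝ᵥ (A + Aᵀ).mulVec w = 0)
    (hle₁ : b₂ ≤ a) (hle₂ : a ≤ b₁) (hlt : b₂ < b₁) :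
    let Θ : ℝ := Real.sqrt (a - b₂) / (Real.sqrt (a - b₂) + Real.sqrt (b₁ - a))
    let x : Fin K → ℝ := fun k =>
      (Θ * u k + (1 - Θ) * w k) / Real.sqrt (Θ ^ 2 + (1 - Θ) ^ 2)
    let v : Fin K → ℝ := fun k =>
      ((1 - Θ) * u k - Θ * w k) / Real.sqrt (Θ ^ 2 + (1 - Θ) ^ 2)
    0 ≤ Θ ∧ Θ ≤ 1 ∧
    x ⬝ᵥ x = 1 ∧ x ⬝ᵥ A.mulVec x = a ∧
    v ⬝ᵥ v = 1 ∧ v ⬝ᵥ x = 0 ∧ v ⬝ᵥ A.mulVec v = b₁ + b₂ - a := by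
  intro Θ x v
  set s : ℝ := Real.sqrt (a - b₂) with hs_def
  set t : ℝ := Real.sqrt (b₁ - a) with ht_def
  have hs0 : 0 ≤ s := Real.sqrt_nonneg _
  have ht0 : 0 ≤ t := Real.sqrt_nonneg _
  have hs2 : s ^ 2 = a - b₂ := Real.sq_sqrt (by linarith)
  have ht2 : t ^ 2 = b₁ - a := Real.sq_sqrt (by linarith)
  have hst : 0 < s + t := by nlinarith [sq_nonneg (s + t)]
  have hΘ : Θ * (s + t) = s := div_mul_cancel₀ _ (ne_of_gt hst)
  have hkey : Θ * t = (1 - Θ) * s := by nlinarith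
  have hΘ0 : 0 ≤ Θ := div_nonneg hs0 (le_of_lt hst)
  have hΘ1 : Θ ≤ 1 := by
    rw [div_le_one hst]; linarith
  set N : ℝ := Θ ^ 2 + (1 - Θ) ^ 2 with hN_def
  have hN : 0 < N := by nlinarith [sq_nonneg (2 * Θ - 1)]
  set r : ℝ := Real.sqrt N with hr_def
  have hr : 0 < r := Real.sqrt_pos.mpr hN
  have hr2 : r ^ 2 = N := Real.sq_sqrt hN.le
  have hrne : r ≠ 0 := ne_of_gt hr
  -- cross terms
  set cuw : ℝ := u ⬝ᵥ A.mulVec w with hcuw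
  set cwu : ℝ := w ⬝ᵥ A.mulVec u with hcwu
  have htrans : u ⬝ᵥ Aᵀ.mulVec w = cwu := by
    rw [dotProduct_comm, mulVec_transpose, hcwu, dotProduct_mulVec]
  have hcr : cuw + cwu = 0 := by
    rw [← hcross, add_mulVec, dotProduct_add, htrans]
  -- expressing x, v as linear combinations
  have hx : x = (Θ / r) • u + ((1 - Θ) / r) • w := by
    funext k
    simp only [x, Pi.add_apply, Pi.smul_apply, smul_eq_mul]
    rw [← hN_def, ← hr_def]
    field_simp
  have hv : v = ((1 - Θ) / r) • u + (-(Θ / r)) • w := by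
    funext k
    simp only [v, Pi.add_apply, Pi.smul_apply, smul_eq_mul]
    rw [← hN_def, ← hr_def]
    field_simp
    ring
  clear_value v x Θ
  have expand : ∀ α β γ δ : ℝ,
      (α • u + β • w) ⬝ᵥ A.mulVec (γ • u + δ • w)
        = α * γ * (u ⬝ᵥ A.mulVec u) + β * δ * (w ⬝ᵥ A.mulVec w)
          + α * δ * cuw + β * γ * cwu := by
    intro α β γ δ
    simp only [mulVec_add, mulVec_smul, dotProduct_add, add_dotProduct,
      smul_dotProduct, dotProduct_smul, smul_eq_mul, hcuw, hcwu]
    ring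
  have expand2 : ∀ α β γ δ : ℝ,
      (α • u + β • w) ⬝ᵥ (γ • u + δ • w)
        = α * γ + β * δ := by
    intro α β γ δ
    simp only [dotProduct_add, add_dotProduct, smul_dotProduct, dotProduct_smul,
      smul_eq_mul, hu, hw, huw, dotProduct_comm w u, huw]
    ring
  have hNne : N ≠ 0 := ne_of_gt hN
  have hdd : ∀ p q : ℝ, (p / r) * (q / r) = p * q / N := by
    intro p q
    rw [div_mul_div_comm, ← hr2]; ring_nf
  have hkey2 : (Θ * t) ^ 2 = ((1 - Θ) * s) ^ 2 := by rw [hkey]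
  refine ⟨hΘ0, hΘ1, ?_, ?_, ?_, ?_, ?_⟩
  · rw [hx, expand2, hdd, hdd, ← add_div, div_eq_one_iff_eq hNne, hN_def]
    ring
  · rw [hx, expand, ← hb₁, ← hb₂, hdd, hdd, hdd, hdd]
    rw [div_mul_eq_mul_div, div_mul_eq_mul_div, div_mul_eq_mul_div, div_mul_eq_mul_div,
      ← add_div, ← add_div, ← add_div, div_eq_iff hNne]
    rw [hN_def]
    linear_combination (-Θ^2) * ht2 + (1-Θ)^2 * hs2 + hkey2
      + (Θ * (1-Θ)) * hcr
  · rw [hv, expand2, neg_div', hdd, hdd, ← add_div, div_eq_one_iff_eq hNne, hN_def]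
    ring
  · rw [hv, hx, expand2]
    ring
  · rw [hv, expand, ← hb₁, ← hb₂, neg_div', hdd, hdd, hdd, hdd]
    rw [div_mul_eq_mul_div, div_mul_eq_mul_div, div_mul_eq_mul_div, div_mul_eq_mul_div,
      ← add_div, ← add_div, ← add_div, div_eq_iff hNne]
    rw [hN_def]
    linear_combination (Θ^2) * ht2 + (-(1-Θ)^2) * hs2 - hkey2
      + (-((1-Θ) * Θ)) * hcr
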